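/- There exists an absolute constant c > 0 such that for any pair of associated random variables X and Y with bounded continuous densities f_X and f_Y respectively, sup_{x,y ∈ ℝ} |P(X ≤ x, Y ≤ y) − P(X ≤ x)·P(Y ≤ y)| ≤ c·(max(sup_x f_X(x), sup_y f_Y(y)))^{2/3}·Cov(X,Y)^{1/3}. -/

import Mathlib

open MeasureTheory Filter Set
open scoped ENNReal Topology

/-- Covariance of two real random variables (when the relevant integrals exist). -/
noncomputable def cov {Ω : Type*} [MeasurableSpace Ω] (P : Measure Ω) (U V : Ω → ℝ) : ℝ :=
  ∫ ω, U ω * V ω ∂P - (∫ ω, U ω ∂P) * ∫ ω, V ω ∂P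

/-- The pair `(X, Y)` is associated : for all coordinatewise nondecreasing `f, g : ℝ² → ℝ`
for which the covariance exists, `Cov(f(X,Y), g(X,Y)) ≥ 0`. -/
def AssocPair {Ω : Type*} [MeasurableSpace Ω] (P : Measure Ω) (X Y : Ω → ℝ) : Prop :=
  ∀ f g : ℝ × ℝ → ℝ, Measurable f → Measurable g → Monotone f → Monotone g →
    Integrable (fun ω => f (X ω, Y ω)) P → Integrable (fun ω => g (X ω, Y ω)) P →
    Integrable (fun ω => f (X ω, Y ω) * g (X ω, Y ω)) P →
    0 ≤ cov P (fun ω => f (X ω, Y ω)) (fun ω => g (X ω, Y ω))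

set_option linter.unusedSectionVars false

section Aux

variable {Ω : Type*} [MeasurableSpace Ω] (P : Measure Ω) [IsProbabilityMeasure P]

lemma integrable_of_bdd {f : Ω → ℝ} (hf : Measurable f) {C : ℝ} (h : ∀ ω, |f ω| ≤ C) :
    Integrable f P :=
  (integrable_const C).mono' hf.aestronglyMeasurable
    (Filter.Eventually.of_forall (fun ω => by simpa [Real.norm_eq_abs] using h ω))

lemma cov_comm (U V : Ω → ℝ) : cov P U V = cov P V U := by
  unfold cov
  have h : ∫ ω, U ω * V ω ∂P = ∫ ω, V ω * U ω ∂P := by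
    congr 1; funext ω; ring
  rw [h]; ring

lemma cov_add_left {U U' V : Ω → ℝ} (hU : Integrable U P) (hU' : Integrable U' P)
    (hUV : Integrable (fun ω => U ω * V ω) P) (hU'V : Integrable (fun ω => U' ω * V ω) P) :
    cov P (fun ω => U ω + U' ω) V = cov P U V + cov P U' V := by
  unfold cov
  have h1 : ∫ ω, (U ω + U' ω) * V ω ∂P = ∫ ω, (U ω * V ω + U' ω * V ω) ∂P := by
    congr 1; funext ω; ring
  rw [h1, integral_add hUV hU'V, integral_add hU hU']
  ring

lemma cov_add_right {U V V' : Ω → ℝ} (hV : Integrable V P) (hV' : Integrable V' P)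
    (hUV : Integrable (fun ω => U ω * V ω) P) (hUV' : Integrable (fun ω => U ω * V' ω) P) :
    cov P U (fun ω => V ω + V' ω) = cov P U V + cov P U V' := by
  unfold cov
  have h1 : ∫ ω, U ω * (V ω + V' ω) ∂P = ∫ ω, (U ω * V ω + U ω * V' ω) ∂P := by
    congr 1; funext ω; ring
  rw [h1, integral_add hUV hUV', integral_add hV hV']
  ring

lemma cov_const_left (c : ℝ) (V : Ω → ℝ) : cov P (fun _ => c) V = 0 := by
  unfold cov
  rw [integral_const_mul, integral_const]
  simp [measure_univ]

lemma cov_neg_neg (U V : Ω → ℝ) :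
    cov P (fun ω => -U ω) (fun ω => -V ω) = cov P U V := by
  unfold cov
  have h1 : ∫ ω, -U ω * -V ω ∂P = ∫ ω, U ω * V ω ∂P := by congr 1; funext ω; ring
  rw [h1, integral_neg, integral_neg]
  ring

lemma cov_shift_right {U V : Ω → ℝ} (c : ℝ) (hU : Integrable U P) (hV : Integrable V P)
    (hUV : Integrable (fun ω => U ω * V ω) P) :
    cov P U V = cov P U (fun ω => V ω - c) := by
  unfold cov
  have h1 : ∫ ω, U ω * (V ω - c) ∂P = ∫ ω, (U ω * V ω - c * U ω) ∂P := by
    congr 1; funext ω; ring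
  rw [h1, integral_sub hUV (hU.const_mul c), integral_const_mul,
    integral_sub hV (integrable_const c), integral_const]
  simp [measure_univ]
  ring

lemma cov_shift_left {U V : Ω → ℝ} (c : ℝ) (hU : Integrable U P) (hV : Integrable V P)
    (hUV : Integrable (fun ω => U ω * V ω) P) :
    cov P U V = cov P (fun ω => U ω - c) V := by
  rw [cov_comm, cov_shift_right P c hV hU
    (by {have : (fun ω => V ω * U ω) = fun ω => U ω * V ω := by funext ω; ring
         rw [this]; exact hUV}), cov_comm]

lemma cov_sum_left (n : ℕ) (U : ℕ → Ω → ℝ) (V : Ω → ℝ)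
    (hU : ∀ i, Integrable (U i) P) (hUV : ∀ i, Integrable (fun ω => U i ω * V ω) P) :
    cov P (fun ω => ∑ i ∈ Finset.range n, U i ω) V
      = ∑ i ∈ Finset.range n, cov P (U i) V := by
  induction n with
  | zero => simpa using cov_const_left P 0 V
  | succ n ih =>
    have hsum : Integrable (fun ω => ∑ i ∈ Finset.range n, U i ω) P :=
      integrable_finset_sum _ (fun i _ => hU i)
    have hsumV : Integrable (fun ω => (∑ i ∈ Finset.range n, U i ω) * V ω) P := by
      have h : (fun ω => (∑ i ∈ Finset.range n, U i ω) * V ω)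
          = fun ω => ∑ i ∈ Finset.range n, U i ω * V ω := by
        funext ω; rw [Finset.sum_mul]
      rw [h]; exact integrable_finset_sum _ (fun i _ => hUV i)
    have h : (fun ω => ∑ i ∈ Finset.range (n+1), U i ω)
        = fun ω => (∑ i ∈ Finset.range n, U i ω) + U n ω := by
      funext ω; rw [Finset.sum_range_succ]
    rw [h, cov_add_left P hsum (hU n) hsumV (hUV n), ih, Finset.sum_range_succ]

lemma abs_integral_le_integral_abs_local (f : Ω → ℝ) : |∫ ω, f ω ∂P| ≤ ∫ ω, |f ω| ∂P := by
  simpa [Real.norm_eq_abs] using norm_integral_le_integral_norm (μ := P) f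

lemma cov_abs_le {A B : Ω → ℝ} (hA : Measurable A) (hB : Measurable B) {a b : ℝ}
    (ha : ∀ ω, |A ω| ≤ a) (hb : ∀ ω, |B ω| ≤ b) (ha0 : 0 ≤ a) (hb0 : 0 ≤ b) :
    |cov P A B| ≤ 2 * (a * b) := by
  have hAi := integrable_of_bdd P hA ha
  have hBi := integrable_of_bdd P hB hb
  have hABb : ∀ ω, |A ω * B ω| ≤ a * b := fun ω => by
    rw [abs_mul]; exact mul_le_mul (ha ω) (hb ω) (abs_nonneg _) ha0
  have hABi : Integrable (fun ω => A ω * B ω) P := integrable_of_bdd P (hA.mul hB) hABb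
  have h1 : |∫ ω, A ω * B ω ∂P| ≤ a * b := by
    refine (abs_integral_le_integral_abs_local P _).trans ?_
    calc ∫ ω, |A ω * B ω| ∂P ≤ ∫ _, a * b ∂P :=
          integral_mono hABi.abs (integrable_const _) hABb
      _ = a * b := by simp [integral_const, measure_univ]
  have h2 : |∫ ω, A ω ∂P| ≤ a := by
    refine (abs_integral_le_integral_abs_local P _).trans ?_
    calc ∫ ω, |A ω| ∂P ≤ ∫ _, a ∂P := integral_mono hAi.abs (integrable_const _) ha
      _ = a := by simp [integral_const, measure_univ]
  have h3 : |∫ ω, B ω ∂P| ≤ b := by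
    refine (abs_integral_le_integral_abs_local P _).trans ?_
    calc ∫ ω, |B ω| ∂P ≤ ∫ _, b ∂P := integral_mono hBi.abs (integrable_const _) hb
      _ = b := by simp [integral_const, measure_univ]
  have h4 : |(∫ ω, A ω ∂P) * ∫ ω, B ω ∂P| ≤ a * b := by
    rw [abs_mul]; exact mul_le_mul h2 h3 (abs_nonneg _) ha0
  unfold cov
  calc |(∫ ω, A ω * B ω ∂P) - (∫ ω, A ω ∂P) * ∫ ω, B ω ∂P|
      ≤ |∫ ω, A ω * B ω ∂P| + |(∫ ω, A ω ∂P) * ∫ ω, B ω ∂P| := abs_sub _ _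
    _ ≤ 2 * (a * b) := by linarith

lemma cov_affine {A B : Ω → ℝ} (c r d u : ℝ) (hA : Integrable A P) (hB : Integrable B P)
    (hAB : Integrable (fun ω => A ω * B ω) P) :
    cov P (fun ω => c + r * A ω) (fun ω => d + u * B ω) = r * u * cov P A B := by
  have i1 : Integrable (fun ω => c * d + (c * u) * B ω) P :=
    (integrable_const _).add (hB.const_mul _)
  have i2 : Integrable (fun ω => (d * r) * A ω + (r * u) * (A ω * B ω)) P :=
    (hA.const_mul _).add (hAB.const_mul _)
  have e1 : ∫ ω, (c + r * A ω) * (d + u * B ω) ∂P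
      = ∫ ω, ((c * d + (c * u) * B ω) + ((d * r) * A ω + (r * u) * (A ω * B ω))) ∂P := by
    congr 1; funext ω; ring
  have e2 : ∫ ω, (c + r * A ω) ∂P = c + r * ∫ ω, A ω ∂P := by
    rw [integral_add (integrable_const c) (hA.const_mul r), integral_const_mul, integral_const]
    simp [measure_univ]
  have e3 : ∫ ω, (d + u * B ω) ∂P = d + u * ∫ ω, B ω ∂P := by
    rw [integral_add (integrable_const d) (hB.const_mul u), integral_const_mul, integral_const]
    simp [measure_univ]
  unfold cov
  rw [e1, integral_add i1 i2, integral_add (integrable_const (c*d)) (hB.const_mul (c*u)),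
    integral_add (hA.const_mul (d*r)) (hAB.const_mul (r*u)), e2, e3,
    integral_const_mul (c*u), integral_const_mul (d*r), integral_const_mul (r*u), integral_const]
  simp only [Measure.real, measure_univ, ENNReal.toReal_one, smul_eq_mul, one_mul]
  ring

end Aux
section Aux2

lemma step_approx (x δ w a p : ℝ) (hw : 0 < w) (hp : x - δ ≤ p) :
    |(min (p + w) (max a (x - δ)) - min p (max a (x - δ)))
        - (w + (-w) * (if a ≤ p then (1:ℝ) else 0))|
      ≤ w * (if a ≤ p + w then (1:ℝ) else 0) - w * (if a ≤ p then (1:ℝ) else 0) := by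
  rw [abs_le]
  constructor <;> (simp only [min_def, max_def]; split_ifs <;> linarith)

lemma clamp_approx (x δ : ℝ) (w : ℝ) (hw : 0 < w) (n : ℕ) (hnw : (n:ℝ) * w = δ) (a : ℝ) :
    |min x (max a (x - δ)) - ((x - δ) + ∑ i ∈ Finset.range n,
        (w + (-w) * (if a ≤ x - δ + (i:ℝ) * w then (1:ℝ) else 0)))| ≤ w := by
  set b := max a (x - δ) with hb
  have hxb : x - δ ≤ b := le_max_right _ _
  have hf0 : min (x - δ + ((0:ℕ):ℝ) * w) b = x - δ := by
    have h0 : x - δ + ((0:ℕ):ℝ) * w = x - δ := by norm_num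
    rw [h0]
    exact min_eq_left hxb
  have hfn : min (x - δ + ((n:ℕ):ℝ) * w) b = min x b := by
    rw [hnw]
    norm_num
  have htel := Finset.sum_range_sub (fun i : ℕ => min (x - δ + (i:ℝ) * w) b) n
  have hdiff : min x b - ((x - δ) + ∑ i ∈ Finset.range n,
      (w + (-w) * (if a ≤ x - δ + (i:ℝ) * w then (1:ℝ) else 0)))
      = ∑ i ∈ Finset.range n,
        ((min (x - δ + ((i+1:ℕ):ℝ) * w) b - min (x - δ + (i:ℝ) * w) b)
          - (w + (-w) * (if a ≤ x - δ + (i:ℝ) * w then (1:ℝ) else 0))) := by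
    rw [Finset.sum_sub_distrib, htel, hf0, hfn]
    ring
  rw [hdiff]
  have htel2 := Finset.sum_range_sub
    (fun i : ℕ => w * (if a ≤ x - δ + (i:ℝ) * w then (1:ℝ) else 0)) n
  calc |∑ i ∈ Finset.range n,
        ((min (x - δ + ((i+1:ℕ):ℝ) * w) b - min (x - δ + (i:ℝ) * w) b)
          - (w + (-w) * (if a ≤ x - δ + (i:ℝ) * w then (1:ℝ) else 0)))|
      ≤ ∑ i ∈ Finset.range n,
        |(min (x - δ + ((i+1:ℕ):ℝ) * w) b - min (x - δ + (i:ℝ) * w) b)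
          - (w + (-w) * (if a ≤ x - δ + (i:ℝ) * w then (1:ℝ) else 0))| :=
        Finset.abs_sum_le_sum_abs _ _
    _ ≤ ∑ i ∈ Finset.range n,
        (w * (if a ≤ x - δ + ((i+1:ℕ):ℝ) * w then (1:ℝ) else 0)
          - w * (if a ≤ x - δ + (i:ℝ) * w then (1:ℝ) else 0)) := by
        refine Finset.sum_le_sum (fun i _ => ?_)
        have hp : x - δ ≤ x - δ + (i:ℝ) * w := by
          have : (0:ℝ) ≤ (i:ℝ) * w := mul_nonneg (Nat.cast_nonneg i) hw.le
          linarith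
        have h := step_approx x δ w a (x - δ + (i:ℝ) * w) hw hp
        have e1 : x - δ + (i:ℝ) * w + w = x - δ + ((i+1:ℕ):ℝ) * w := by push_cast; ring
        rw [e1] at h
        exact h
    _ = w * (if a ≤ x - δ + ((n:ℕ):ℝ) * w then (1:ℝ) else 0)
          - w * (if a ≤ x - δ + ((0:ℕ):ℝ) * w then (1:ℝ) else 0) := htel2
    _ ≤ w := by split_ifs <;> simp <;> linarith

lemma clamp_le_bounds (z c a : ℝ) (hcz : c ≤ z) :
    c ≤ min z (max a c) ∧ min z (max a c) ≤ z :=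
  ⟨le_min hcz (le_max_right _ _), min_le_left _ _⟩

lemma id_sub_clamp_mono (z c : ℝ) : Monotone (fun a : ℝ => a - min z (max a c)) := by
  intro a b hab
  simp only [min_def, max_def]
  split_ifs <;> linarith

end Aux2
section Aux3

variable {Ω : Type*} [MeasurableSpace Ω] (P : Measure Ω) [IsProbabilityMeasure P]

lemma toReal_measure_diff {A B : Set Ω} (hA : MeasurableSet A) (hAB : A ⊆ B) :
    (P (B \ A)).toReal = (P B).toReal - (P A).toReal := by
  rw [measure_diff hAB hA.nullMeasurableSet (measure_ne_top P A),
    ENNReal.toReal_sub_of_le (measure_mono hAB) (measure_ne_top P B)]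

lemma integral_ind_le (X : Ω → ℝ) (hX : Measurable X) (s : ℝ) :
    ∫ ω, (if X ω ≤ s then (1:ℝ) else 0) ∂P = (P {ω | X ω ≤ s}).toReal := by
  have h : (fun ω => if X ω ≤ s then (1:ℝ) else 0)
      = ({ω | X ω ≤ s} : Set Ω).indicator (fun _ => (1:ℝ)) := by
    funext ω
    by_cases hω : X ω ≤ s <;> simp [Set.indicator_apply, hω]
  rw [h, integral_indicator_const (1:ℝ) (measurableSet_le hX measurable_const)]
  simp
  rfl

lemma integral_ind_mul (X Y : Ω → ℝ) (hX : Measurable X) (hY : Measurable Y) (s t : ℝ) :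
    ∫ ω, (if X ω ≤ s then (1:ℝ) else 0) * (if Y ω ≤ t then (1:ℝ) else 0) ∂P
      = (P {ω | X ω ≤ s ∧ Y ω ≤ t}).toReal := by
  have hmeas : MeasurableSet {ω | X ω ≤ s ∧ Y ω ≤ t} :=
    (measurableSet_le hX measurable_const).inter (measurableSet_le hY measurable_const)
  have h : (fun ω => (if X ω ≤ s then (1:ℝ) else 0) * (if Y ω ≤ t then (1:ℝ) else 0))
      = ({ω | X ω ≤ s ∧ Y ω ≤ t} : Set Ω).indicator (fun _ => (1:ℝ)) := by
    funext ω
    by_cases h1 : X ω ≤ s <;> by_cases h2 : Y ω ≤ t <;>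
      simp [Set.indicator_apply, h1, h2]
  rw [h, integral_indicator_const (1:ℝ) hmeas]
  simp
  rfl

lemma cov_ind (X Y : Ω → ℝ) (hX : Measurable X) (hY : Measurable Y) (s t : ℝ) :
    cov P (fun ω => if X ω ≤ s then (1:ℝ) else 0) (fun ω => if Y ω ≤ t then (1:ℝ) else 0)
      = (P {ω | X ω ≤ s ∧ Y ω ≤ t}).toReal
        - (P {ω | X ω ≤ s}).toReal * (P {ω | Y ω ≤ t}).toReal := by
  unfold cov
  rw [integral_ind_mul P X Y hX hY s t, integral_ind_le P X hX s, integral_ind_le P Y hY t]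

lemma H_nonneg (X Y : Ω → ℝ) (hX : Measurable X) (hY : Measurable Y)
    (hA : AssocPair P X Y) (s t : ℝ) :
    0 ≤ (P {ω | X ω ≤ s ∧ Y ω ≤ t}).toReal
        - (P {ω | X ω ≤ s}).toReal * (P {ω | Y ω ≤ t}).toReal := by
  have hmf : Monotone (fun p : ℝ × ℝ => -(if p.1 ≤ s then (1:ℝ) else 0)) := by
    intro p q hpq
    simp only [neg_le_neg_iff]
    by_cases hq : q.1 ≤ s
    · rw [if_pos hq, if_pos (le_trans hpq.1 hq)]
    · rw [if_neg hq]; split_ifs <;> norm_num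
  have hmg : Monotone (fun p : ℝ × ℝ => -(if p.2 ≤ t then (1:ℝ) else 0)) := by
    intro p q hpq
    simp only [neg_le_neg_iff]
    by_cases hq : q.2 ≤ t
    · rw [if_pos hq, if_pos (le_trans hpq.2 hq)]
    · rw [if_neg hq]; split_ifs <;> norm_num
  have hXm : Measurable (fun ω => -(if X ω ≤ s then (1:ℝ) else 0)) :=
    ((Measurable.ite (measurableSet_le hX measurable_const)
      measurable_const measurable_const)).neg
  have hYm : Measurable (fun ω => -(if Y ω ≤ t then (1:ℝ) else 0)) :=
    ((Measurable.ite (measurableSet_le hY measurable_const)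
      measurable_const measurable_const)).neg
  have hXb : ∀ ω, |(-(if X ω ≤ s then (1:ℝ) else 0))| ≤ 1 := fun ω => by
    split_ifs <;> norm_num
  have hYb : ∀ ω, |(-(if Y ω ≤ t then (1:ℝ) else 0))| ≤ 1 := fun ω => by
    split_ifs <;> norm_num
  have hXYb : ∀ ω, |(-(if X ω ≤ s then (1:ℝ) else 0)) * (-(if Y ω ≤ t then (1:ℝ) else 0))| ≤ 1 :=
    fun ω => by split_ifs <;> norm_num
  have hfm : Measurable (fun p : ℝ × ℝ => -(if p.1 ≤ s then (1:ℝ) else 0)) :=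
    ((Measurable.ite (measurableSet_le measurable_fst measurable_const)
      measurable_const measurable_const)).neg
  have hgm : Measurable (fun p : ℝ × ℝ => -(if p.2 ≤ t then (1:ℝ) else 0)) :=
    ((Measurable.ite (measurableSet_le measurable_snd measurable_const)
      measurable_const measurable_const)).neg
  have key := hA (fun p : ℝ × ℝ => -(if p.1 ≤ s then (1:ℝ) else 0))
    (fun p : ℝ × ℝ => -(if p.2 ≤ t then (1:ℝ) else 0)) hfm hgm hmf hmg
    (integrable_of_bdd P hXm hXb) (integrable_of_bdd P hYm hYb)
    (integrable_of_bdd P (hXm.mul hYm) hXYb)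
  have heq : cov P (fun ω => -(if X ω ≤ s then (1:ℝ) else 0))
      (fun ω => -(if Y ω ≤ t then (1:ℝ) else 0))
      = (P {ω | X ω ≤ s ∧ Y ω ≤ t}).toReal
        - (P {ω | X ω ≤ s}).toReal * (P {ω | Y ω ≤ t}).toReal := by
    rw [cov_neg_neg, cov_ind P X Y hX hY s t]
  have key2 : (0:ℝ) ≤ cov P (fun ω => -(if X ω ≤ s then (1:ℝ) else 0))
      (fun ω => -(if Y ω ≤ t then (1:ℝ) else 0)) := key
  rw [heq] at key2
  exact key2

lemma H_lb (X Y : Ω → ℝ) (hX : Measurable X) (hY : Measurable Y) (M : ℝ)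
    (hLX : ∀ s u : ℝ, s ≤ u →
      (P {ω | X ω ≤ u}).toReal - (P {ω | X ω ≤ s}).toReal ≤ M * (u - s))
    (hLY : ∀ s u : ℝ, s ≤ u →
      (P {ω | Y ω ≤ u}).toReal - (P {ω | Y ω ≤ s}).toReal ≤ M * (u - s))
    (x y s t : ℝ) (hs : s ≤ x) (ht : t ≤ y) :
    ((P {ω | X ω ≤ x ∧ Y ω ≤ y}).toReal
        - (P {ω | X ω ≤ x}).toReal * (P {ω | Y ω ≤ y}).toReal)
      - M * (x - s) - M * (y - t)
    ≤ (P {ω | X ω ≤ s ∧ Y ω ≤ t}).toReal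
        - (P {ω | X ω ≤ s}).toReal * (P {ω | Y ω ≤ t}).toReal := by
  have hsubX : {ω | X ω ≤ s} ⊆ {ω | X ω ≤ x} := fun ω hω => le_trans hω hs
  have hsubY : {ω | Y ω ≤ t} ⊆ {ω | Y ω ≤ y} := fun ω hω => le_trans hω ht
  have hsub : {ω | X ω ≤ x ∧ Y ω ≤ y}
      ⊆ ({ω | X ω ≤ s ∧ Y ω ≤ t} ∪ ({ω | X ω ≤ x} \ {ω | X ω ≤ s}))
        ∪ ({ω | Y ω ≤ y} \ {ω | Y ω ≤ t}) := by
    intro ω hω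
    by_cases h1 : X ω ≤ s
    · by_cases h2 : Y ω ≤ t
      · exact Or.inl (Or.inl ⟨h1, h2⟩)
      · exact Or.inr ⟨hω.2, h2⟩
    · exact Or.inl (Or.inr ⟨hω.1, h1⟩)
  have hm : P {ω | X ω ≤ x ∧ Y ω ≤ y}
      ≤ P {ω | X ω ≤ s ∧ Y ω ≤ t} + P ({ω | X ω ≤ x} \ {ω | X ω ≤ s})
        + P ({ω | Y ω ≤ y} \ {ω | Y ω ≤ t}) :=
    (measure_mono hsub).trans ((measure_union_le _ _).trans
      (add_le_add (measure_union_le _ _) le_rfl))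
  have hfin : P {ω | X ω ≤ s ∧ Y ω ≤ t} + P ({ω | X ω ≤ x} \ {ω | X ω ≤ s})
      + P ({ω | Y ω ≤ y} \ {ω | Y ω ≤ t}) ≠ ∞ := by
    refine ENNReal.add_ne_top.mpr ⟨ENNReal.add_ne_top.mpr ⟨?_, ?_⟩, ?_⟩ <;>
      exact measure_ne_top P _
  have hreal : (P {ω | X ω ≤ x ∧ Y ω ≤ y}).toReal
      ≤ (P {ω | X ω ≤ s ∧ Y ω ≤ t}).toReal
        + (P ({ω | X ω ≤ x} \ {ω | X ω ≤ s})).toReal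
        + (P ({ω | Y ω ≤ y} \ {ω | Y ω ≤ t})).toReal := by
    have := ENNReal.toReal_mono hfin hm
    rwa [ENNReal.toReal_add (ENNReal.add_ne_top.mpr
        ⟨measure_ne_top P _, measure_ne_top P _⟩) (measure_ne_top P _),
      ENNReal.toReal_add (measure_ne_top P _) (measure_ne_top P _)] at this
  have hdX : (P ({ω | X ω ≤ x} \ {ω | X ω ≤ s})).toReal
      = (P {ω | X ω ≤ x}).toReal - (P {ω | X ω ≤ s}).toReal :=
    toReal_measure_diff P (measurableSet_le hX measurable_const) hsubX
  have hdY : (P ({ω | Y ω ≤ y} \ {ω | Y ω ≤ t})).toReal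
      = (P {ω | Y ω ≤ y}).toReal - (P {ω | Y ω ≤ t}).toReal :=
    toReal_measure_diff P (measurableSet_le hY measurable_const) hsubY
  have hLips1 := hLX s x hs
  have hLips2 := hLY t y ht
  have hprod : (P {ω | X ω ≤ s}).toReal * (P {ω | Y ω ≤ t}).toReal
      ≤ (P {ω | X ω ≤ x}).toReal * (P {ω | Y ω ≤ y}).toReal := by
    refine mul_le_mul ?_ ?_ ENNReal.toReal_nonneg ENNReal.toReal_nonneg
    · exact ENNReal.toReal_mono (measure_ne_top P _) (measure_mono hsubX)
    · exact ENNReal.toReal_mono (measure_ne_top P _) (measure_mono hsubY)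
  rw [hdX, hdY] at hreal
  linarith

lemma final_alg (h M C : ℝ) (h0 : 0 ≤ h) (hM : 0 ≤ M) (hC : 0 ≤ C)
    (hcube : h^3 ≤ 27 * M^2 * C) : h ≤ 3 * M ^ ((2:ℝ)/3) * C ^ ((1:ℝ)/3) := by
  have h1 : h = (h^3) ^ ((1:ℝ)/3) := by
    rw [← Real.rpow_natCast h 3, ← Real.rpow_mul h0]
    norm_num
  rw [h1]
  calc (h^3) ^ ((1:ℝ)/3) ≤ (27 * M^2 * C) ^ ((1:ℝ)/3) :=
        Real.rpow_le_rpow (by positivity) hcube (by norm_num)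
    _ = 3 * M ^ ((2:ℝ)/3) * C ^ ((1:ℝ)/3) := by
        rw [Real.mul_rpow (by positivity) hC, Real.mul_rpow (by norm_num) (sq_nonneg M)]
        rw [show (27:ℝ) = (3:ℝ)^(3:ℕ) by norm_num, ← Real.rpow_natCast (3:ℝ) 3,
          ← Real.rpow_mul (by norm_num : (0:ℝ) ≤ 3)]
        rw [← Real.rpow_natCast M 2, ← Real.rpow_mul hM]
        norm_num

end Aux3
section Helpers

variable {Ω : Type*} [MeasurableSpace Ω] (P : Measure Ω) [IsProbabilityMeasure P]

lemma integrable_mul_bdd {f g : Ω → ℝ} (hfi : Integrable f P) (hg : Measurable g) {C : ℝ}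
    (hgb : ∀ ω, |g ω| ≤ C) : Integrable (fun ω => f ω * g ω) P := by
  have h := Integrable.bdd_mul hfi hg.aestronglyMeasurable
    (Filter.Eventually.of_forall fun ω => by simpa [Real.norm_eq_abs] using hgb ω)
  have he : (fun ω => f ω * g ω) = fun ω => g ω * f ω := by funext ω; ring
  rw [he]; exact h

lemma integrable_bdd_mul {f g : Ω → ℝ} (hfi : Integrable f P) (hg : Measurable g) {C : ℝ}
    (hgb : ∀ ω, |g ω| ≤ C) : Integrable (fun ω => g ω * f ω) P :=
  Integrable.bdd_mul hfi hg.aestronglyMeasurable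
    (Filter.Eventually.of_forall fun ω => by simpa [Real.norm_eq_abs] using hgb ω)

end Helpers
section Main

lemma main_bound {Ω : Type*} [MeasurableSpace Ω] (P : Measure Ω) [IsProbabilityMeasure P]
    (X Y : Ω → ℝ) (hX : Measurable X) (hY : Measurable Y) (hA : AssocPair P X Y)
    (hXi : Integrable X P) (hYi : Integrable Y P)
    (hXYi : Integrable (fun ω => X ω * Y ω) P)
    (M : ℝ) (hM0 : 0 ≤ M)
    (hLX : ∀ s u : ℝ, s ≤ u →
      (P {ω | X ω ≤ u}).toReal - (P {ω | X ω ≤ s}).toReal ≤ M * (u - s))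
    (hLY : ∀ s u : ℝ, s ≤ u →
      (P {ω | Y ω ≤ u}).toReal - (P {ω | Y ω ≤ s}).toReal ≤ M * (u - s))
    (x y δ : ℝ) (hδ : 0 < δ) :
    δ^2 * ((P {ω | X ω ≤ x ∧ Y ω ≤ y}).toReal
        - (P {ω | X ω ≤ x}).toReal * (P {ω | Y ω ≤ y}).toReal) - 2*M*δ^3
      ≤ cov P X Y := by
  set h := (P {ω | X ω ≤ x ∧ Y ω ≤ y}).toReal
    - (P {ω | X ω ≤ x}).toReal * (P {ω | Y ω ≤ y}).toReal with hhdef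
  clear_value h
  set U : Ω → ℝ := fun ω => min x (max (X ω) (x - δ)) with hUdef
  set V : Ω → ℝ := fun ω => min y (max (Y ω) (y - δ)) with hVdef
  -- basic facts about U, V
  have hUm : Measurable U := by
    rw [hUdef]; exact measurable_const.min (hX.max measurable_const)
  have hVm : Measurable V := by
    rw [hVdef]; exact measurable_const.min (hY.max measurable_const)
  have hUlb : ∀ ω, x - δ ≤ U ω ∧ U ω ≤ x := by
    intro ω; rw [hUdef]; exact clamp_le_bounds x (x - δ) (X ω) (by linarith)
  have hVlb : ∀ ω, y - δ ≤ V ω ∧ V ω ≤ y := by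
    intro ω; rw [hVdef]; exact clamp_le_bounds y (y - δ) (Y ω) (by linarith)
  have hUb : ∀ ω, |U ω| ≤ |x| + δ := fun ω => by
    rw [abs_le]; constructor
    · have := (hUlb ω).1; have := neg_abs_le x; linarith
    · have := (hUlb ω).2; have := le_abs_self x; linarith
  have hVb : ∀ ω, |V ω| ≤ |y| + δ := fun ω => by
    rw [abs_le]; constructor
    · have := (hVlb ω).1; have := neg_abs_le y; linarith
    · have := (hVlb ω).2; have := le_abs_self y; linarith
  have hUi : Integrable U P := integrable_of_bdd P hUm hUb
  have hVi : Integrable V P := integrable_of_bdd P hVm hVb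
  have hUVb : ∀ ω, |U ω * V ω| ≤ (|x| + δ) * (|y| + δ) := fun ω => by
    rw [abs_mul]
    exact mul_le_mul (hUb ω) (hVb ω) (abs_nonneg _) (by positivity)
  have hUVi : Integrable (fun ω => U ω * V ω) P :=
    integrable_of_bdd P (hUm.mul hVm) hUVb
  have hXVi : Integrable (fun ω => X ω * V ω) P :=
    integrable_mul_bdd P hXi hVm hVb
  have hUYi : Integrable (fun ω => U ω * Y ω) P :=
    integrable_bdd_mul P hYi hUm hUb
  have hXUi : Integrable (fun ω => X ω - U ω) P := hXi.sub hUi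
  have hYVi : Integrable (fun ω => Y ω - V ω) P := hYi.sub hVi
  have hXUYi : Integrable (fun ω => (X ω - U ω) * Y ω) P := by
    have he : (fun ω => (X ω - U ω) * Y ω) = fun ω => X ω * Y ω - U ω * Y ω := by
      funext ω; ring
    rw [he]; exact hXYi.sub hUYi
  have hXUVi : Integrable (fun ω => (X ω - U ω) * V ω) P := by
    have he : (fun ω => (X ω - U ω) * V ω) = fun ω => X ω * V ω - U ω * V ω := by
      funext ω; ring
    rw [he]; exact hXVi.sub hUVi
  have hUYVi : Integrable (fun ω => U ω * (Y ω - V ω)) P := by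
    have he : (fun ω => U ω * (Y ω - V ω)) = fun ω => U ω * Y ω - U ω * V ω := by
      funext ω; ring
    rw [he]; exact hUYi.sub hUVi
  have hXUYVi : Integrable (fun ω => (X ω - U ω) * (Y ω - V ω)) P := by
    have he : (fun ω => (X ω - U ω) * (Y ω - V ω))
        = fun ω => ((X ω * Y ω - X ω * V ω) - (U ω * Y ω - U ω * V ω)) := by
      funext ω; ring
    rw [he]; exact (hXYi.sub hXVi).sub (hUYi.sub hUVi)
  -- Step 1 : association gives cov U V ≤ cov X Y
  have hstep1 : cov P U V ≤ cov P X Y := by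
    have e1 : cov P X Y = cov P (fun ω => (X ω - U ω) + U ω) Y := by
      have he : (fun ω => (X ω - U ω) + U ω) = X := by funext ω; ring
      rw [he]
    have e2 : cov P X Y = cov P (fun ω => X ω - U ω) Y + cov P U Y := by
      rw [e1, cov_add_left P hXUi hUi hXUYi hUYi]
    have e3 : cov P (fun ω => X ω - U ω) Y
        = cov P (fun ω => X ω - U ω) (fun ω => (Y ω - V ω) + V ω) := by
      have he : (fun ω => (Y ω - V ω) + V ω) = Y := by funext ω; ring
      rw [he]
    have e4 : cov P (fun ω => X ω - U ω) Y
        = cov P (fun ω => X ω - U ω) (fun ω => Y ω - V ω)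
          + cov P (fun ω => X ω - U ω) V := by
      rw [e3, cov_add_right P hYVi hVi hXUYVi hXUVi]
    have e5 : cov P U Y = cov P U (fun ω => (Y ω - V ω) + V ω) := by
      have he : (fun ω => (Y ω - V ω) + V ω) = Y := by funext ω; ring
      rw [he]
    have e6 : cov P U Y = cov P U (fun ω => Y ω - V ω) + cov P U V := by
      rw [e5, cov_add_right P hYVi hVi hUYVi hUVi]
    -- nonnegativity of three covariances by association
    have hmUf : Monotone (fun p : ℝ × ℝ => min x (max p.1 (x - δ))) :=
      Monotone.min monotone_const (Monotone.max monotone_fst monotone_const)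
    have hmVg : Monotone (fun p : ℝ × ℝ => min y (max p.2 (y - δ))) :=
      Monotone.min monotone_const (Monotone.max monotone_snd monotone_const)
    have hmXUf : Monotone (fun p : ℝ × ℝ => p.1 - min x (max p.1 (x - δ))) :=
      (id_sub_clamp_mono x (x - δ)).comp monotone_fst
    have hmYVg : Monotone (fun p : ℝ × ℝ => p.2 - min y (max p.2 (y - δ))) :=
      (id_sub_clamp_mono y (y - δ)).comp monotone_snd
    have hMUf : Measurable (fun p : ℝ × ℝ => min x (max p.1 (x - δ))) :=
      measurable_const.min (measurable_fst.max measurable_const)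
    have hMVg : Measurable (fun p : ℝ × ℝ => min y (max p.2 (y - δ))) :=
      measurable_const.min (measurable_snd.max measurable_const)
    have hMXUf : Measurable (fun p : ℝ × ℝ => p.1 - min x (max p.1 (x - δ))) :=
      measurable_fst.sub hMUf
    have hMYVg : Measurable (fun p : ℝ × ℝ => p.2 - min y (max p.2 (y - δ))) :=
      measurable_snd.sub hMVg
    have hc1 : (0:ℝ) ≤ cov P (fun ω => X ω - U ω) (fun ω => Y ω - V ω) :=
      hA (fun p : ℝ × ℝ => p.1 - min x (max p.1 (x - δ)))
        (fun p : ℝ × ℝ => p.2 - min y (max p.2 (y - δ)))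
        hMXUf hMYVg hmXUf hmYVg hXUi hYVi hXUYVi
    have hc2 : (0:ℝ) ≤ cov P (fun ω => X ω - U ω) V :=
      hA (fun p : ℝ × ℝ => p.1 - min x (max p.1 (x - δ)))
        (fun p : ℝ × ℝ => min y (max p.2 (y - δ)))
        hMXUf hMVg hmXUf hmVg hXUi hVi hXUVi
    have hc3 : (0:ℝ) ≤ cov P U (fun ω => Y ω - V ω) :=
      hA (fun p : ℝ × ℝ => min x (max p.1 (x - δ)))
        (fun p : ℝ × ℝ => p.2 - min y (max p.2 (y - δ)))
        hMUf hMYVg hmUf hmYVg hUi hYVi hUYVi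
    linarith [e2, e4, e6]
  clear_value U V
  -- Step 2 : grid approximation
  have hstep2 : ∀ n : ℕ, 1 ≤ n →
      δ^2 * h - 2*M*δ^3 - 4*(δ^2/(n:ℝ)) ≤ cov P U V := by
    intro n hn
    have hnR : (0:ℝ) < (n:ℝ) := by
      have : 0 < n := lt_of_lt_of_le Nat.zero_lt_one hn
      exact_mod_cast this
    set w : ℝ := δ / (n:ℝ) with hwdef
    have hw : 0 < w := div_pos hδ hnR
    have hnw : (n:ℝ) * w = δ := by
      rw [hwdef]; field_simp
    clear_value w
    set E : ℕ → Ω → ℝ :=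
      fun i ω => w + (-w) * (if X ω ≤ x - δ + (i:ℝ) * w then (1:ℝ) else 0) with hEdef
    set F : ℕ → Ω → ℝ :=
      fun j ω => w + (-w) * (if Y ω ≤ y - δ + (j:ℝ) * w then (1:ℝ) else 0) with hFdef
    set Un : Ω → ℝ := fun ω => (x - δ) + ∑ i ∈ Finset.range n, E i ω with hUndef
    set Vn : Ω → ℝ := fun ω => (y - δ) + ∑ j ∈ Finset.range n, F j ω with hVndef
    clear_value E F Un Vn
    -- basic facts about E, F
    have hEm : ∀ i, Measurable (E i) := by
      intro i; simp only [hEdef]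
      exact measurable_const.add
        ((Measurable.ite (measurableSet_le hX measurable_const)
          measurable_const measurable_const).const_mul (-w))
    have hFm : ∀ j, Measurable (F j) := by
      intro j; simp only [hFdef]
      exact measurable_const.add
        ((Measurable.ite (measurableSet_le hY measurable_const)
          measurable_const measurable_const).const_mul (-w))
    have hErange : ∀ i ω, 0 ≤ E i ω ∧ E i ω ≤ w := by
      intro i ω; simp only [hEdef]; constructor <;> (split_ifs <;> linarith)
    have hFrange : ∀ j ω, 0 ≤ F j ω ∧ F j ω ≤ w := by
      intro j ω; simp only [hFdef]; constructor <;> (split_ifs <;> linarith)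
    have hEb : ∀ i ω, |E i ω| ≤ w := fun i ω => by
      rw [abs_le]; have := hErange i ω; constructor <;> linarith
    have hFb : ∀ j ω, |F j ω| ≤ w := fun j ω => by
      rw [abs_le]; have := hFrange j ω; constructor <;> linarith
    have hEi : ∀ i, Integrable (E i) P := fun i => integrable_of_bdd P (hEm i) (hEb i)
    have hFi : ∀ j, Integrable (F j) P := fun j => integrable_of_bdd P (hFm j) (hFb j)
    -- facts about Un, Vn
    have hUnm : Measurable Un := by
      rw [hUndef]
      exact measurable_const.add (Finset.measurable_sum _ (fun i _ => hEm i))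
    have hVnm : Measurable Vn := by
      rw [hVndef]
      exact measurable_const.add (Finset.measurable_sum _ (fun j _ => hFm j))
    have hUnS : ∀ ω, 0 ≤ ∑ i ∈ Finset.range n, E i ω ∧ ∑ i ∈ Finset.range n, E i ω ≤ δ := by
      intro ω
      constructor
      · exact Finset.sum_nonneg (fun i _ => (hErange i ω).1)
      · calc ∑ i ∈ Finset.range n, E i ω ≤ ∑ _i ∈ Finset.range n, w :=
              Finset.sum_le_sum (fun i _ => (hErange i ω).2)
          _ = (n:ℝ) * w := by rw [Finset.sum_const, Finset.card_range, nsmul_eq_mul]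
          _ = δ := hnw
    have hVnS : ∀ ω, 0 ≤ ∑ j ∈ Finset.range n, F j ω ∧ ∑ j ∈ Finset.range n, F j ω ≤ δ := by
      intro ω
      constructor
      · exact Finset.sum_nonneg (fun j _ => (hFrange j ω).1)
      · calc ∑ j ∈ Finset.range n, F j ω ≤ ∑ _j ∈ Finset.range n, w :=
              Finset.sum_le_sum (fun j _ => (hFrange j ω).2)
          _ = (n:ℝ) * w := by rw [Finset.sum_const, Finset.card_range, nsmul_eq_mul]
          _ = δ := hnw
    have hUnb : ∀ ω, |Un ω - (x - δ)| ≤ δ := by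
      intro ω
      have h2 : Un ω - (x - δ) = ∑ i ∈ Finset.range n, E i ω := by
        simp only [hUndef]; ring
      rw [h2, abs_le]
      exact ⟨by linarith [(hUnS ω).1], by linarith [(hUnS ω).2]⟩
    have hVnb : ∀ ω, |Vn ω - (y - δ)| ≤ δ := by
      intro ω
      have h2 : Vn ω - (y - δ) = ∑ j ∈ Finset.range n, F j ω := by
        simp only [hVndef]; ring
      rw [h2, abs_le]
      exact ⟨by linarith [(hVnS ω).1], by linarith [(hVnS ω).2]⟩
    have hUnabs : ∀ ω, |Un ω| ≤ |x| + δ := by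
      intro ω
      have h2 : Un ω = (x - δ) + ∑ i ∈ Finset.range n, E i ω := by simp only [hUndef]
      have := le_abs_self x; have := neg_abs_le x
      rw [abs_le, h2]
      exact ⟨by linarith [(hUnS ω).1], by linarith [(hUnS ω).2]⟩
    have hVnabs : ∀ ω, |Vn ω| ≤ |y| + δ := by
      intro ω
      have h2 : Vn ω = (y - δ) + ∑ j ∈ Finset.range n, F j ω := by simp only [hVndef]
      have := le_abs_self y; have := neg_abs_le y
      rw [abs_le, h2]
      exact ⟨by linarith [(hVnS ω).1], by linarith [(hVnS ω).2]⟩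
    have hUni : Integrable Un P := integrable_of_bdd P hUnm hUnabs
    have hVni : Integrable Vn P := integrable_of_bdd P hVnm hVnabs
    -- approximation bounds
    have hUUn : ∀ ω, |U ω - Un ω| ≤ w := by
      intro ω
      rw [hUdef, hUndef]
      simp only [hEdef]
      exact clamp_approx x δ w hw n hnw (X ω)
    have hVVn : ∀ ω, |V ω - Vn ω| ≤ w := by
      intro ω
      rw [hVdef, hVndef]
      simp only [hFdef]
      exact clamp_approx y δ w hw n hnw (Y ω)
    -- splitting
    have hUUni : Integrable (fun ω => U ω - Un ω) P := hUi.sub hUni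
    have hVVni : Integrable (fun ω => V ω - Vn ω) P := hVi.sub hVni
    have hUUnVi : Integrable (fun ω => (U ω - Un ω) * V ω) P :=
      integrable_of_bdd P ((hUm.sub hUnm).mul hVm) (fun ω => by
        rw [abs_mul]
        exact mul_le_mul (hUUn ω) (hVb ω) (abs_nonneg _) hw.le)
    have hUnVVni : Integrable (fun ω => Un ω * (V ω - Vn ω)) P :=
      integrable_of_bdd P (hUnm.mul (hVm.sub hVnm)) (fun ω => by
        rw [abs_mul]
        exact mul_le_mul (hUnabs ω) (hVVn ω) (abs_nonneg _) (by positivity))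
    have hUnVi : Integrable (fun ω => Un ω * V ω) P :=
      integrable_of_bdd P (hUnm.mul hVm) (fun ω => by
        rw [abs_mul]
        exact mul_le_mul (hUnabs ω) (hVb ω) (abs_nonneg _) (by positivity))
    have hUnVni : Integrable (fun ω => Un ω * Vn ω) P :=
      integrable_of_bdd P (hUnm.mul hVnm) (fun ω => by
        rw [abs_mul]
        exact mul_le_mul (hUnabs ω) (hVnabs ω) (abs_nonneg _) (by positivity))
    have es1 : cov P U V = cov P (fun ω => U ω - Un ω) V + cov P Un V := by
      have he : (fun ω => (U ω - Un ω) + Un ω) = U := by funext ω; ring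
      rw [show cov P U V = cov P (fun ω => (U ω - Un ω) + Un ω) V from by rw [he],
        cov_add_left P hUUni hUni hUUnVi hUnVi]
    have es2 : cov P Un V = cov P Un (fun ω => V ω - Vn ω) + cov P Un Vn := by
      have he : (fun ω => (V ω - Vn ω) + Vn ω) = V := by funext ω; ring
      rw [show cov P Un V = cov P Un (fun ω => (V ω - Vn ω) + Vn ω) from by rw [he],
        cov_add_right P hVVni hVni hUnVVni hUnVni]
    -- error bounds
    have herr1 : |cov P (fun ω => U ω - Un ω) V| ≤ 2 * (w * δ) := by
      rw [cov_shift_right P (y - δ) hUUni hVi hUUnVi]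
      exact cov_abs_le P (hUm.sub hUnm) (hVm.sub measurable_const) hUUn
        (fun ω => by
          simp only [Pi.sub_apply]; rw [abs_le]; have := hVlb ω; constructor <;> linarith [this.1, this.2])
        hw.le hδ.le
    have herr2 : |cov P Un (fun ω => V ω - Vn ω)| ≤ 2 * (δ * w) := by
      rw [cov_shift_left P (x - δ) hUni hVVni hUnVVni]
      exact cov_abs_le P (hUnm.sub measurable_const) (hVm.sub hVnm)
        (fun ω => hUnb ω) hVVn hδ.le hw.le
    -- covariance of the grid approximations
    have hindXm : ∀ i : ℕ, Measurable (fun ω => if X ω ≤ x - δ + (i:ℝ) * w then (1:ℝ) else 0) :=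
      fun i => Measurable.ite (measurableSet_le hX measurable_const)
        measurable_const measurable_const
    have hindYm : ∀ j : ℕ, Measurable (fun ω => if Y ω ≤ y - δ + (j:ℝ) * w then (1:ℝ) else 0) :=
      fun j => Measurable.ite (measurableSet_le hY measurable_const)
        measurable_const measurable_const
    have hindb : ∀ (c : ℝ) (ω : Ω) (Z : Ω → ℝ), |(if Z ω ≤ c then (1:ℝ) else 0)| ≤ 1 := by
      intro c ω Z; split_ifs <;> norm_num
    have hpair : ∀ i ∈ Finset.range n, ∀ j ∈ Finset.range n,
        w^2 * (h - 2*M*δ) ≤ cov P (E i) (F j) := by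
      intro i hi j hj
      have hiw : (i:ℝ) * w ≤ δ := by
        have h1 : (i:ℝ) ≤ (n:ℝ) := by
          have := Finset.mem_range.mp hi
          exact_mod_cast this.le
        calc (i:ℝ) * w ≤ (n:ℝ) * w := mul_le_mul_of_nonneg_right h1 hw.le
          _ = δ := hnw
      have hjw : (j:ℝ) * w ≤ δ := by
        have h1 : (j:ℝ) ≤ (n:ℝ) := by
          have := Finset.mem_range.mp hj
          exact_mod_cast this.le
        calc (j:ℝ) * w ≤ (n:ℝ) * w := mul_le_mul_of_nonneg_right h1 hw.le
          _ = δ := hnw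
      have hiw0 : 0 ≤ (i:ℝ) * w := mul_nonneg (Nat.cast_nonneg i) hw.le
      have hjw0 : 0 ≤ (j:ℝ) * w := mul_nonneg (Nat.cast_nonneg j) hw.le
      have hcovEF : cov P (E i) (F j)
          = (-w) * (-w) * ((P {ω | X ω ≤ x - δ + (i:ℝ) * w ∧ Y ω ≤ y - δ + (j:ℝ) * w}).toReal
            - (P {ω | X ω ≤ x - δ + (i:ℝ) * w}).toReal
              * (P {ω | Y ω ≤ y - δ + (j:ℝ) * w}).toReal) := by
        have := cov_affine P (A := fun ω => if X ω ≤ x - δ + (i:ℝ) * w then (1:ℝ) else 0)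
          (B := fun ω => if Y ω ≤ y - δ + (j:ℝ) * w then (1:ℝ) else 0)
          w (-w) w (-w)
          (integrable_of_bdd P (hindXm i) (fun ω => hindb _ ω X))
          (integrable_of_bdd P (hindYm j) (fun ω => hindb _ ω Y))
          (integrable_of_bdd P ((hindXm i).mul (hindYm j)) (fun ω => by
            rw [abs_mul]
            exact mul_le_mul (hindb _ ω X) (hindb _ ω Y) (abs_nonneg _) zero_le_one))
        simp only [hEdef, hFdef]
        rw [this, cov_ind P X Y hX hY]
      have hHlb := H_lb P X Y hX hY M hLX hLY x y (x - δ + (i:ℝ) * w) (y - δ + (j:ℝ) * w)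
        (by linarith) (by linarith)
      have hMx : M * (x - (x - δ + (i:ℝ) * w)) ≤ M * δ :=
        mul_le_mul_of_nonneg_left (by linarith) hM0
      have hMy : M * (y - (y - δ + (j:ℝ) * w)) ≤ M * δ :=
        mul_le_mul_of_nonneg_left (by linarith) hM0
      have hHfinal : h - 2*M*δ
          ≤ (P {ω | X ω ≤ x - δ + (i:ℝ) * w ∧ Y ω ≤ y - δ + (j:ℝ) * w}).toReal
            - (P {ω | X ω ≤ x - δ + (i:ℝ) * w}).toReal
              * (P {ω | Y ω ≤ y - δ + (j:ℝ) * w}).toReal := by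
        rw [hhdef]; linarith
      calc w^2 * (h - 2*M*δ)
          ≤ w^2 * ((P {ω | X ω ≤ x - δ + (i:ℝ) * w ∧ Y ω ≤ y - δ + (j:ℝ) * w}).toReal
            - (P {ω | X ω ≤ x - δ + (i:ℝ) * w}).toReal
              * (P {ω | Y ω ≤ y - δ + (j:ℝ) * w}).toReal) :=
            mul_le_mul_of_nonneg_left hHfinal (by positivity)
        _ = cov P (E i) (F j) := by rw [hcovEF]; ring
    -- cov Un Vn as a double sum
    have hEVni : ∀ i, Integrable (fun ω => E i ω * Vn ω) P := fun i =>
      integrable_of_bdd P ((hEm i).mul hVnm) (fun ω => by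
        rw [abs_mul]
        exact mul_le_mul (hEb i ω) (hVnabs ω) (abs_nonneg _) hw.le)
    have hsums : cov P Un Vn = ∑ i ∈ Finset.range n, cov P (E i) Vn := by
      rw [hUndef]
      have hsumi : Integrable (fun ω => ∑ i ∈ Finset.range n, E i ω) P :=
        integrable_finset_sum _ (fun i _ => hEi i)
      have hsumVi : Integrable (fun ω => (∑ i ∈ Finset.range n, E i ω) * Vn ω) P := by
        have he : (fun ω => (∑ i ∈ Finset.range n, E i ω) * Vn ω)
            = fun ω => ∑ i ∈ Finset.range n, E i ω * Vn ω := by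
          funext ω; rw [Finset.sum_mul]
        rw [he]; exact integrable_finset_sum _ (fun i _ => hEVni i)
      rw [cov_add_left P (integrable_const (x - δ)) hsumi
          (hVni.const_mul (x - δ)) hsumVi,
        cov_const_left, zero_add, cov_sum_left P n E Vn hEi hEVni]
    have hrow : ∀ i, cov P (E i) Vn = ∑ j ∈ Finset.range n, cov P (E i) (F j) := by
      intro i
      have hFEi : ∀ j, Integrable (fun ω => F j ω * E i ω) P := fun j =>
        integrable_of_bdd P ((hFm j).mul (hEm i)) (fun ω => by
          rw [abs_mul]
          exact mul_le_mul (hFb j ω) (hEb i ω) (abs_nonneg _) hw.le)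
      have hsumj : Integrable (fun ω => ∑ j ∈ Finset.range n, F j ω) P :=
        integrable_finset_sum _ (fun j _ => hFi j)
      have hsumEi : Integrable (fun ω => (∑ j ∈ Finset.range n, F j ω) * E i ω) P := by
        have he : (fun ω => (∑ j ∈ Finset.range n, F j ω) * E i ω)
            = fun ω => ∑ j ∈ Finset.range n, F j ω * E i ω := by
          funext ω; rw [Finset.sum_mul]
        rw [he]; exact integrable_finset_sum _ (fun j _ => hFEi j)
      rw [cov_comm, hVndef]
      rw [cov_add_left P (integrable_const (y - δ)) hsumj
          ((hEi i).const_mul (y - δ)) hsumEi,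
        cov_const_left, zero_add, cov_sum_left P n F (E i) hFi hFEi]
      exact Finset.sum_congr rfl (fun j _ => cov_comm P (F j) (E i))
    have hUnVnlb : δ^2 * (h - 2*M*δ) ≤ cov P Un Vn := by
      rw [hsums]
      calc δ^2 * (h - 2*M*δ)
          = ∑ _i ∈ Finset.range n, ∑ _j ∈ Finset.range n, w^2 * (h - 2*M*δ) := by
            rw [Finset.sum_const, Finset.sum_const, Finset.card_range, nsmul_eq_mul,
              nsmul_eq_mul, ← hnw]
            ring
        _ ≤ ∑ i ∈ Finset.range n, ∑ j ∈ Finset.range n, cov P (E i) (F j) :=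
            Finset.sum_le_sum (fun i hi => Finset.sum_le_sum (fun j hj => hpair i hi j hj))
        _ = ∑ i ∈ Finset.range n, cov P (E i) Vn :=
            Finset.sum_congr rfl (fun i _ => (hrow i).symm)
    -- put everything together
    have habs1 := (abs_le.mp herr1).1
    have habs2 := (abs_le.mp herr2).1
    have hwd : w * δ = δ^2 / (n:ℝ) := by rw [hwdef]; ring
    have hfin : δ^2 * (h - 2*M*δ) - 4*(δ^2/(n:ℝ)) ≤ cov P U V := by
      rw [es1, es2]
      have e9 : (2:ℝ) * (w * δ) + 2 * (δ * w) = 4*(δ^2/(n:ℝ)) := by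
        rw [hwdef]; ring
      linarith [habs1, habs2, hUnVnlb, e9]
    have e10 : δ^2 * (h - 2*M*δ) = δ^2*h - 2*M*δ^3 := by ring
    linarith
  -- Step 3 : let n → ∞
  have hlim : δ^2 * h - 2*M*δ^3 ≤ cov P U V := by
    have ht : Tendsto (fun n : ℕ => δ^2*h - 2*M*δ^3 - 4*(δ^2/(n:ℝ))) atTop
        (𝓝 (δ^2*h - 2*M*δ^3)) := by
      have h1 : Tendsto (fun n : ℕ => (4*δ^2)/(n:ℝ)) atTop (𝓝 0) :=
        tendsto_const_div_atTop_nhds_zero_nat (4*δ^2)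
      have h2 := (tendsto_const_nhds (x := δ^2*h - 2*M*δ^3) (f := atTop (α := ℕ))).sub h1
      rw [sub_zero] at h2
      convert h2 using 2 with n
      ring
    refine le_of_tendsto ht ?_
    filter_upwards [eventually_ge_atTop 1] with n hn
    exact hstep2 n hn
  linarith


end Main
theorem bagai_prakasa_rao_inequality :
    ∃ c : ℝ, 0 < c ∧
      ∀ (Ω : Type) [MeasurableSpace Ω] (P : Measure Ω), IsProbabilityMeasure P →
      ∀ X Y : Ω → ℝ, Measurable X → Measurable Y →
      AssocPair P X Y →
      -- the covariance of X and Y exists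
      Integrable X P → Integrable Y P → Integrable (fun ω => X ω * Y ω) P →
      -- bounded continuous densities
      ∀ fX fY : ℝ → ℝ, Continuous fX → Continuous fY →
      (∀ x, 0 ≤ fX x) → (∀ y, 0 ≤ fY y) →
      BddAbove (Set.range fX) → BddAbove (Set.range fY) →
      Measure.map X P = MeasureTheory.volume.withDensity (fun x => ENNReal.ofReal (fX x)) →
      Measure.map Y P = MeasureTheory.volume.withDensity (fun y => ENNReal.ofReal (fY y)) →
      ∀ x y : ℝ,
        |(P {ω | X ω ≤ x ∧ Y ω ≤ y}).toReal
            - (P {ω | X ω ≤ x}).toReal * (P {ω | Y ω ≤ y}).toReal|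
          ≤ c * max (⨆ x', fX x') (⨆ y', fY y') ^ ((2 : ℝ) / 3)
              * cov P X Y ^ ((1 : ℝ) / 3) := by
  refine ⟨3, by norm_num, ?_⟩
  intro Ω _ P hP X Y hX hY hA hXi hYi hXYi fX fY hfXc hfYc hfX0 hfY0 hBX hBY hmX hmY x y
  haveI := hP
  set M := max (⨆ x', fX x') (⨆ y', fY y') with hMdef
  have hfXM : ∀ t, fX t ≤ M := fun t =>
    le_trans (le_ciSup hBX t) (le_max_left _ _)
  have hfYM : ∀ t, fY t ≤ M := fun t =>
    le_trans (le_ciSup hBY t) (le_max_right _ _)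
  have hM0 : 0 ≤ M := le_trans (hfX0 0) (hfXM 0)
  -- Lipschitz property of distribution functions from the bounded densities
  have hLip : ∀ (Z : Ω → ℝ) (fZ : ℝ → ℝ), Measurable Z → (∀ t, fZ t ≤ M) →
      Measure.map Z P = MeasureTheory.volume.withDensity (fun z => ENNReal.ofReal (fZ z)) →
      ∀ s u : ℝ, s ≤ u →
        (P {ω | Z ω ≤ u}).toReal - (P {ω | Z ω ≤ s}).toReal ≤ M * (u - s) := by
    intro Z fZ hZ hfZM hmZ s u hsu
    have hsub : {ω | Z ω ≤ s} ⊆ {ω | Z ω ≤ u} := fun ω hω => le_trans hω hsu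
    have hdiff := toReal_measure_diff P (measurableSet_le hZ measurable_const) hsub
    have hset : {ω | Z ω ≤ u} \ {ω | Z ω ≤ s} = Z ⁻¹' (Set.Ioc s u) := by
      ext ω
      simp only [Set.mem_diff, Set.mem_setOf_eq, Set.mem_preimage, Set.mem_Ioc, not_le]
      tauto
    have hmap : P (Z ⁻¹' (Set.Ioc s u)) = (Measure.map Z P) (Set.Ioc s u) :=
      (Measure.map_apply hZ measurableSet_Ioc).symm
    have hbound : (Measure.map Z P) (Set.Ioc s u)
        ≤ ENNReal.ofReal M * ENNReal.ofReal (u - s) := by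
      rw [hmZ, withDensity_apply _ measurableSet_Ioc]
      calc ∫⁻ a in Set.Ioc s u, ENNReal.ofReal (fZ a) ∂volume
          ≤ ∫⁻ _ in Set.Ioc s u, ENNReal.ofReal M ∂volume :=
            lintegral_mono (fun a => ENNReal.ofReal_le_ofReal (hfZM a))
        _ = ENNReal.ofReal M * volume (Set.Ioc s u) := by
            rw [setLIntegral_const]
        _ = ENNReal.ofReal M * ENNReal.ofReal (u - s) := by
            rw [Real.volume_Ioc]
    have hfinal : (P ({ω | Z ω ≤ u} \ {ω | Z ω ≤ s})).toReal ≤ M * (u - s) := by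
      rw [hset, hmap]
      have h2 := ENNReal.toReal_mono
        (ENNReal.mul_ne_top ENNReal.ofReal_ne_top ENNReal.ofReal_ne_top) hbound
      rwa [ENNReal.toReal_mul, ENNReal.toReal_ofReal hM0,
        ENNReal.toReal_ofReal (by linarith)] at h2
    rw [hdiff] at hfinal
    exact hfinal
  have hLX := hLip X fX hX hfXM hmX
  have hLY := hLip Y fY hY hfYM hmY
  -- M is positive
  have hMpos : 0 < M := by
    rcases lt_or_ge 0 M with hM | hM
    · exact hM
    exfalso
    have hfx0 : ∀ t, fX t = 0 := fun t => le_antisymm (le_trans (hfXM t) hM) (hfX0 t)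
    have h0 : (fun t => ENNReal.ofReal (fX t)) = (fun _ => (0:ℝ≥0∞)) := by
      funext t; rw [hfx0 t]; simp
    have hz : Measure.map X P Set.univ = 0 := by
      rw [hmX, h0]
      simp [MeasureTheory.withDensity_zero]
    rw [Measure.map_apply hX MeasurableSet.univ] at hz
    simp at hz
  -- nonnegativity facts
  have hcov0 : 0 ≤ cov P X Y :=
    hA (fun p : ℝ × ℝ => p.1) (fun p : ℝ × ℝ => p.2)
      measurable_fst measurable_snd monotone_fst monotone_snd hXi hYi hXYi
  have hH0 : 0 ≤ (P {ω | X ω ≤ x ∧ Y ω ≤ y}).toReal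
      - (P {ω | X ω ≤ x}).toReal * (P {ω | Y ω ≤ y}).toReal :=
    H_nonneg P X Y hX hY hA x y
  -- the cube inequality
  have hcube : ((P {ω | X ω ≤ x ∧ Y ω ≤ y}).toReal
      - (P {ω | X ω ≤ x}).toReal * (P {ω | Y ω ≤ y}).toReal)^3
      ≤ 27 * M^2 * cov P X Y := by
    rcases hH0.eq_or_lt with hzero | hpos
    · rw [← hzero]
      norm_num
      positivity
    · set h := (P {ω | X ω ≤ x ∧ Y ω ≤ y}).toReal
        - (P {ω | X ω ≤ x}).toReal * (P {ω | Y ω ≤ y}).toReal with hhdef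
      have hδ : 0 < h / (3*M) := div_pos hpos (by linarith)
      have hkey := main_bound P X Y hX hY hA hXi hYi hXYi M hM0 hLX hLY x y
        (h / (3*M)) hδ
      rw [← hhdef] at hkey
      have e : (h/(3*M))^2 * h - 2*M*(h/(3*M))^3 = h^3 / (27*M^2) := by
        field_simp
        ring
      rw [e] at hkey
      rw [div_le_iff₀ (by positivity)] at hkey
      nlinarith [hkey]
  rw [abs_of_nonneg hH0]
  exact final_alg _ M (cov P X Y) hH0 hM0 hcov0 hcube
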